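/- Let G = (V,E,w) be a weighted directed graph, η > 0, and x ∈ ℝⁿ. Let A_{ij} = e^{x_i - x_j - η w(i,j)} for (i,j) ∈ E. Then -η⁻¹ log(∑_{(i,j)∈E} A_{ij}) ≤ μ(G), where μ(G) is the minimum over directed cycles σ in G of the mean weight (1/|σ|)∑_{e∈σ} w(e). -/

import Mathlib

open Finset

/-- A directed cycle: a nonempty list of distinct vertices whose consecutive
pairs (cyclically) are edges of `E`. -/
def IsCycle {n : ℕ} (E : Finset (Fin n × Fin n)) (c : List (Fin n)) : Prop :=
  c ≠ [] ∧ c.Nodup ∧ ∀ p ∈ c.zip (c.rotate 1), p ∈ E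

/-- Mean weight of a cycle. -/
noncomputable def meanWeight {n : ℕ} (w : Fin n × Fin n → ℝ) (c : List (Fin n)) : ℝ :=
  ((c.zip (c.rotate 1)).map w).sum / c.length

/-- Min-mean-cycle value of the digraph `(V, E, w)`. -/
noncomputable def mmc {n : ℕ} (E : Finset (Fin n × Fin n)) (w : Fin n × Fin n → ℝ) : ℝ :=
  sInf {x : ℝ | ∃ c, IsCycle E c ∧ meanWeight w c = x}

/-- Membership in `Δ_E`: a nonnegative matrix supported on `E` with total sum 1. -/
def InDeltaE {n : ℕ} (E : Finset (Fin n × Fin n)) (P : Matrix (Fin n) (Fin n) ℝ) : Prop :=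
  (∀ i j, 0 ≤ P i j) ∧ (∀ i j, (i, j) ∉ E → P i j = 0) ∧ (∑ i, ∑ j, P i j) = 1

/-- A circulation: netflow is balanced at every vertex. -/
def IsBalanced {n : ℕ} (P : Matrix (Fin n) (Fin n) ℝ) : Prop :=
  ∀ i, (∑ j, P i j) = ∑ j, P j i

/-- Total netflow imbalance `‖P𝟏 - Pᵀ𝟏‖₁`. -/
noncomputable def imb {n : ℕ} (P : Matrix (Fin n) (Fin n) ℝ) : ℝ :=
  ∑ i, |(∑ j, P i j) - ∑ j, P j i|

/-- Entrywise ℓ₁ norm of a matrix. -/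
noncomputable def l1 {n : ℕ} (P : Matrix (Fin n) (Fin n) ℝ) : ℝ :=
  ∑ i, ∑ j, |P i j|

/-- There is a directed path from `i` to `j` of length at most `d`. -/
def ConnectsWithin {n : ℕ} (E : Finset (Fin n × Fin n)) (d : ℕ) (i j : Fin n) : Prop :=
  ∃ l : List (Fin n), l.length ≤ d ∧ List.Chain (fun a b => (a, b) ∈ E) i l ∧
    (i :: l).getLast (List.cons_ne_nil _ _) = j

/-- A directed walk from `s` to `v` along edges of `E`, recorded by its
list of vertices after `s`. -/
def IsWalkFrom {n : ℕ} (E : Finset (Fin n × Fin n)) (s v : Fin n) (l : List (Fin n)) : Prop :=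
  List.Chain (fun a b => (a, b) ∈ E) s l ∧ (s :: l).getLast (List.cons_ne_nil _ _) = v

/-- Weight of a walk. -/
noncomputable def walkWeight {n : ℕ} (w : Fin n × Fin n → ℝ) (s : Fin n) (l : List (Fin n)) : ℝ :=
  (((s :: l).zip l).map w).sum


lemma list_prod_le_pow (S : ℝ) : ∀ l : List ℝ, (∀ a ∈ l, 0 ≤ a ∧ a ≤ S) → l.prod ≤ S ^ l.length := by
  intro l
  induction l with
  | nil => simp
  | cons a t ih =>
    intro h
    have ha := h a List.mem_cons_self
    have ht : ∀ b ∈ t, 0 ≤ b ∧ b ≤ S := fun b hb => h b (List.mem_cons_of_mem _ hb)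
    have htp : (0:ℝ) ≤ t.prod := List.prod_nonneg (fun b hb => (ht b hb).1)
    simp only [List.prod_cons, List.length_cons, pow_succ]
    calc a * t.prod ≤ S * S ^ t.length := by
          apply mul_le_mul ha.2 (ih ht) htp (le_trans ha.1 ha.2)
      _ = S ^ t.length * S := mul_comm _ _

lemma exp_list_sum (f : α → ℝ) : ∀ l : List α,
    (l.map (fun a => Real.exp (f a))).prod = Real.exp ((l.map f).sum) := by
  intro l
  induction l with
  | nil => simp
  | cons a t ih => simp [ih, Real.exp_add]

lemma list_sum_split {n : ℕ} (x : Fin n → ℝ) (η : ℝ) (w : Fin n × Fin n → ℝ) :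
    ∀ l : List (Fin n × Fin n),
    (l.map (fun p => x p.1 - x p.2 - η * w p)).sum
      = (l.map (fun p => x p.1)).sum - (l.map (fun p => x p.2)).sum - η * (l.map w).sum := by
  intro l
  induction l with
  | nil => simp
  | cons a t ih => simp [ih]; ring

/-- **Lower bound on MMC via balancing.** With `A_{ij} = e^{x_i - x_j - η w(i,j)}` on
the edges of `G`, we have `-η⁻¹ log (∑_{(i,j)∈E} A_{ij}) ≤ μ(G)`. -/
theorem softmin_lower_bound_mmc {n : ℕ} (E : Finset (Fin n × Fin n))
    (w : Fin n × Fin n → ℝ) (η : ℝ) (hη : 0 < η) (x : Fin n → ℝ)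
    (hcyc : ∃ c, IsCycle E c)
    (A : Fin n × Fin n → ℝ)
    (hA : ∀ e ∈ E, A e = Real.exp (x e.1 - x e.2 - η * w e)) :
    -η⁻¹ * Real.log (∑ e ∈ E, A e) ≤ mmc E w := by
  obtain ⟨c₀, hc₀⟩ := hcyc
  refine le_csInf ⟨meanWeight w c₀, c₀, hc₀, rfl⟩ ?_
  rintro y ⟨c, ⟨hne, hnd, hE⟩, rfl⟩
  set L := c.zip (c.rotate 1) with hL
  have hlenL : L.length = c.length := by
    simp [hL, List.length_zip, List.length_rotate]
  have hk : 0 < c.length := List.length_pos_iff.mpr hne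
  set S := ∑ e ∈ E, A e with hS
  have hApos : ∀ e ∈ E, 0 < A e := fun e he => by rw [hA e he]; positivity
  have hLne : L ≠ [] := by
    intro h; rw [h] at hlenL; simp at hlenL; omega
  have he0 : L.head hLne ∈ E := hE _ (List.head_mem hLne)
  have hSpos : 0 < S :=
    lt_of_lt_of_le (hApos _ he0) (Finset.single_le_sum (fun e he => (hApos e he).le) he0)
  have hAleS : ∀ e ∈ L, A e ≤ S := fun e he =>
    Finset.single_le_sum (fun e' he' => (hApos e' he').le) (hE e he)
  -- telescoping sum
  have hfst : L.map Prod.fst = c := List.map_fst_zip (le_of_eq (c.length_rotate 1).symm)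
  have hsnd : L.map Prod.snd = c.rotate 1 := List.map_snd_zip (le_of_eq (c.length_rotate 1))
  have hperm : ((c.rotate 1).map x).sum = (c.map x).sum :=
    List.Perm.sum_eq (List.Perm.map x (c.rotate_perm 1))
  set W := (L.map w).sum with hW
  have hsum : (L.map (fun p => x p.1 - x p.2 - η * w p)).sum = -η * W := by
    rw [list_sum_split]
    have h1 : (L.map (fun p : Fin n × Fin n => x p.1)).sum = (c.map x).sum := by
      have : (L.map (fun p : Fin n × Fin n => x p.1)) = (L.map Prod.fst).map x := by
        rw [List.map_map]; rfl
      rw [this, hfst]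
    have h2 : (L.map (fun p : Fin n × Fin n => x p.2)).sum = (c.map x).sum := by
      have : (L.map (fun p : Fin n × Fin n => x p.2)) = (L.map Prod.snd).map x := by
        rw [List.map_map]; rfl
      rw [this, hsnd, hperm]
    rw [h1, h2]; ring
  -- product of A over cycle edges
  have hprodeq : (L.map A).prod = Real.exp (-η * W) := by
    have : L.map A = L.map (fun p => Real.exp (x p.1 - x p.2 - η * w p)) :=
      List.map_congr_left (fun p hp => hA p (hE p hp))
    rw [this, exp_list_sum, hsum]
  have hprodle : (L.map A).prod ≤ S ^ c.length := by
    have := list_prod_le_pow S (L.map A) (by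
      intro a ha
      obtain ⟨p, hp, rfl⟩ := List.mem_map.mp ha
      exact ⟨(hApos p (hE p hp)).le, hAleS p hp⟩)
    simpa [hlenL] using this
  have hexp : Real.exp (-η * W) ≤ S ^ c.length := hprodeq ▸ hprodle
  have hlog : -η * W ≤ (c.length : ℝ) * Real.log S := by
    have := Real.log_le_log (Real.exp_pos _) hexp
    rwa [Real.log_exp, Real.log_pow] at this
  have hk' : (0:ℝ) < (c.length : ℝ) := by exact_mod_cast hk
  rw [meanWeight, ← hL, ← hW, le_div_iff₀ hk']
  have h2 : -W ≤ η⁻¹ * ((c.length : ℝ) * Real.log S) := by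
    have h3 := mul_le_mul_of_nonneg_left hlog (inv_nonneg.mpr hη.le)
    have h4 : η⁻¹ * (-η * W) = -W := by field_simp
    linarith [h4 ▸ h3]
  nlinarith [h2]
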